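/- The set {K_α : α ∈ 𝔽(2ⁿ)} of trace-Kerdock matrices is a Kerdock set of maximal size: it consists of exactly 2ⁿ symmetric n×n matrices over ℤ₂, it contains the zero matrix, and for any two distinct elements K_α ≠ K_β the matrix K_α + K_β (sum over ℤ₂) has full rank n. -/

import Mathlib

open Matrix

section TraceAux

variable {F : Type} [Field F]

/-- The absolute trace map on a field of characteristic 2 with `2^n` elements. -/
noncomputable def Tr (n : ℕ) (x : F) : F := ∑ i ∈ Finset.range n, x ^ 2 ^ i

theorem Tr_def (n : ℕ) (x : F) : Tr n x = ∑ i ∈ Finset.range n, x ^ 2 ^ i := rfl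

theorem Tr_zero (n : ℕ) : Tr (F := F) n 0 = 0 := by
  simp [Tr]

theorem Tr_add [CharP F 2] (n : ℕ) (x y : F) : Tr n (x + y) = Tr n x + Tr n y := by
  simp only [Tr, add_pow_char_pow, Finset.sum_add_distrib]

/-- `Tr` as an additive monoid hom. -/
noncomputable def TrHom [CharP F 2] (n : ℕ) : F →+ F where
  toFun := Tr n
  map_zero' := Tr_zero n
  map_add' := Tr_add n

theorem Tr_smul [CharP F 2] [Algebra (ZMod 2) F] (n : ℕ) (c : ZMod 2) (x : F) :
    Tr n (c • x) = c • Tr n x := by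
  have hc : ∀ c : ZMod 2, c = 0 ∨ c = 1 := by decide
  rcases hc c with rfl | rfl <;> simp [Tr_zero]

theorem Tr_sq [Fintype F] {n : ℕ} [CharP F 2] (hcard : Fintype.card F = 2 ^ n) (x : F) :
    Tr n x * Tr n x = Tr n x := by
  have h1 : Tr n x * Tr n x = ∑ i ∈ Finset.range n, x ^ 2 ^ (i + 1) := by
    rw [← sq, Tr, sum_pow_char]
    refine Finset.sum_congr rfl fun i _ => ?_
    rw [← pow_mul, pow_succ]
  have h2 : (∑ i ∈ Finset.range n, x ^ 2 ^ (i + 1)) + x ^ 2 ^ 0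
      = (∑ i ∈ Finset.range n, x ^ 2 ^ i) + x ^ 2 ^ n := by
    rw [← Finset.sum_range_succ' (fun i => x ^ 2 ^ i) n, Finset.sum_range_succ]
  have h3 : x ^ 2 ^ n = x := by rw [← hcard]; exact FiniteField.pow_card x
  have h4 : x ^ 2 ^ 0 = x := by simp
  rw [h3, h4] at h2
  rw [h1, Tr_def]; exact add_right_cancel h2

theorem Tr_eq_zero_or_one [Fintype F] {n : ℕ} [CharP F 2] (hcard : Fintype.card F = 2 ^ n)
    (x : F) : Tr n x = 0 ∨ Tr n x = 1 := by
  have h := Tr_sq hcard x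
  have h' : Tr n x * (Tr n x - 1) = 0 := by rw [mul_sub, mul_one, h, sub_self]
  rcases mul_eq_zero.mp h' with h0 | h1
  · exact Or.inl h0
  · exact Or.inr (sub_eq_zero.mp h1)

theorem Tr_nondeg [Fintype F] {n : ℕ} (hn : 1 ≤ n) (hcard : Fintype.card F = 2 ^ n)
    {γ : F} (hγ : ∀ x : F, Tr n (γ * x) = 0) : γ = 0 := by
  by_contra hne
  have hall : ∀ y : F, Tr n y = 0 := fun y => by
    have := hγ (γ⁻¹ * y)
    rwa [← mul_assoc, mul_inv_cancel₀ hne, one_mul] at this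
  set P : Polynomial F := ∑ i ∈ Finset.range n, Polynomial.X ^ 2 ^ i with hP
  have heval : ∀ y : F, P.eval y = 0 := fun y => by
    simpa [P, Polynomial.eval_finset_sum, ← Tr_def] using hall y
  have hdegP : P.natDegree < Fintype.card F := by
    refine lt_of_le_of_lt (Polynomial.natDegree_sum_le_of_forall_le (n := 2 ^ (n - 1)) _ _
      (fun i hi => ?_)) ?_
    · rw [Polynomial.natDegree_X_pow]
      exact Nat.pow_le_pow_right (by norm_num) (by have := Finset.mem_range.mp hi; omega)
    · rw [hcard]
      exact Nat.pow_lt_pow_right (by norm_num) (by omega)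
  have hPz : P = 0 :=
    Polynomial.eq_zero_of_natDegree_lt_card_of_eval_eq_zero P Function.injective_id
      (fun y => heval y) (by simpa using hdegP)
  have hc : P.coeff (2 ^ (n - 1)) = 1 := by
    rw [hP, Polynomial.finset_sum_coeff]
    rw [Finset.sum_eq_single (n - 1)]
    · simp
    · intro i hi hne'
      rw [Polynomial.coeff_X_pow, if_neg]
      exact fun hEq => hne' (Nat.pow_right_injective (le_refl 2) hEq.symm)
    · intro hmem
      exact absurd (Finset.mem_range.mpr (by omega)) hmem
  rw [hPz] at hc
  simp at hc

end TraceAux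

/-- The set {K_α : α ∈ 𝔽(2ⁿ)} of trace-Kerdock matrices is a Kerdock set of
maximal size: it has exactly 2ⁿ elements, all its elements are symmetric n×n matrices
over ℤ₂, it contains the zero matrix, and for any two distinct elements K_α ≠ K_β the
sum K_α + K_β (over ℤ₂) has full rank n. -/
theorem stmt_4 (n : ℕ) (hn : 1 ≤ n) (h : Polynomial (ZMod 2))
    (hmonic : h.Monic) (hdeg : h.natDegree = n) (hirr : Irreducible h)
    (hprim : orderOf (AdjoinRoot.root h) = 2 ^ n - 1)
    (S : Set (Matrix (Fin n) (Fin n) (ZMod 2)))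
    (hS : S = {K | ∃ α : AdjoinRoot h, ∀ j k : Fin n,
        algebraMap (ZMod 2) (AdjoinRoot h) (K j k)
          = ∑ i ∈ Finset.range n, (α * (AdjoinRoot.root h) ^ ((j : ℕ) + (k : ℕ))) ^ (2 ^ i)}) :
    Nat.card S = 2 ^ n
    ∧ (∀ K ∈ S, K.IsSymm)
    ∧ 0 ∈ S
    ∧ (∀ K₁ ∈ S, ∀ K₂ ∈ S, K₁ ≠ K₂ → (K₁ + K₂).rank = n) := by
  haveI : Fact (Irreducible h) := ⟨hirr⟩
  haveI : CharP (AdjoinRoot h) 2 :=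
    charP_of_injective_algebraMap (algebraMap (ZMod 2) (AdjoinRoot h)).injective 2
  set ξ : AdjoinRoot h := AdjoinRoot.root h with hξ
  have hh0 : h ≠ 0 := hmonic.ne_zero
  set pb := AdjoinRoot.powerBasis hh0 with hpb
  have hdim : pb.dim = n := by rw [hpb, AdjoinRoot.powerBasis_dim, hdeg]
  set B : Module.Basis (Fin n) (ZMod 2) (AdjoinRoot h) :=
    pb.basis.reindex (finCongr hdim) with hBdef
  have hB : ∀ j : Fin n, B j = ξ ^ (j : ℕ) := by
    intro j
    rw [hBdef, Module.Basis.reindex_apply, pb.coe_basis]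
    simp [hpb, AdjoinRoot.powerBasis_gen, hξ]
  haveI : Fintype (AdjoinRoot h) := Module.fintypeOfFintype B
  have hcard : Fintype.card (AdjoinRoot h) = 2 ^ n := by
    rw [Module.card_fintype B, ZMod.card, Fintype.card_fin]
  have hinj : Function.Injective (algebraMap (ZMod 2) (AdjoinRoot h)) :=
    (algebraMap (ZMod 2) (AdjoinRoot h)).injective
  -- membership reformulated via Tr
  have hmem : ∀ K, K ∈ S ↔ ∃ α : AdjoinRoot h, ∀ j k : Fin n,
      algebraMap (ZMod 2) (AdjoinRoot h) (K j k) = Tr n (α * ξ ^ ((j : ℕ) + (k : ℕ))) := by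
    intro K; rw [hS]; rfl
  have hTr01 := Tr_eq_zero_or_one (n := n) hcard
  -- the trace-Kerdock matrix of α
  set M : AdjoinRoot h → Matrix (Fin n) (Fin n) (ZMod 2) := fun α j k =>
    if Tr n (α * ξ ^ ((j : ℕ) + (k : ℕ))) = 1 then 1 else 0 with hMdef
  have hM : ∀ (α : AdjoinRoot h) (j k : Fin n),
      algebraMap (ZMod 2) (AdjoinRoot h) (M α j k) = Tr n (α * ξ ^ ((j : ℕ) + (k : ℕ))) := by
    intro α j k
    rcases hTr01 (α * ξ ^ ((j : ℕ) + (k : ℕ))) with h0 | h1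
    · rw [h0, hMdef]; simp [h0]
    · rw [h1, hMdef]; simp [h1]
  have hMmem : ∀ α, M α ∈ S := fun α => (hmem _).mpr ⟨α, fun j k => hM α j k⟩
  -- sum rule for Tr
  have hTrsum : ∀ (f : Fin n → AdjoinRoot h),
      Tr n (∑ j : Fin n, f j) = ∑ j : Fin n, Tr n (f j) :=
    fun f => map_sum (TrHom (F := AdjoinRoot h) n) f Finset.univ
  -- nondegeneracy against the basis powers
  have nondeg : ∀ δ : AdjoinRoot h,
      (∀ j : Fin n, Tr n (δ * ξ ^ (j : ℕ)) = 0) → δ = 0 := by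
    intro δ hδ
    refine Tr_nondeg hn hcard (γ := δ) (fun x => ?_)
    have hx : x = ∑ j : Fin n, B.repr x j • B j := (B.sum_repr x).symm
    have hterm : ∀ j : Fin n, δ * (B.repr x j • B j) = B.repr x j • (δ * ξ ^ (j : ℕ)) := by
      intro j; rw [hB j, mul_smul_comm]
    rw [hx, Finset.mul_sum]
    simp_rw [hterm]
    rw [hTrsum]
    simp [Tr_smul, hδ]
  -- every element of S is of the form M α
  have hSM : ∀ K ∈ S, ∃ α, K = M α := by
    intro K hK
    obtain ⟨α, hα⟩ := (hmem K).mp hK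
    exact ⟨α, by ext j k; exact hinj (by rw [hα j k, hM])⟩
  have hSrange : S = Set.range M := by
    ext K
    constructor
    · intro hK; obtain ⟨α, rfl⟩ := hSM K hK; exact ⟨α, rfl⟩
    · rintro ⟨α, rfl⟩; exact hMmem α
  -- injectivity of M
  have Minj : Function.Injective M := by
    intro α β hab
    have key : ∀ j : Fin n, Tr n ((α + β) * ξ ^ (j : ℕ)) = 0 := by
      intro j
      have e1 := congrArg (fun K => algebraMap (ZMod 2) (AdjoinRoot h) (K j (⟨0, hn⟩ : Fin n))) hab
      rw [hM, hM] at e1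
      have e2 : ((j : ℕ) + ((⟨0, hn⟩ : Fin n) : ℕ)) = (j : ℕ) := by simp
      rw [e2] at e1
      rw [add_mul, Tr_add, e1, CharTwo.add_self_eq_zero]
    have hz : α + β = 0 := nondeg _ key
    rwa [← CharTwo.sub_eq_add, sub_eq_zero] at hz
  -- additivity of M
  have Madd : ∀ α β : AdjoinRoot h, M α + M β = M (α + β) := by
    intro α β
    ext j k
    apply hinj
    rw [Matrix.add_apply, map_add, hM, hM, hM, add_mul, Tr_add]
  -- rank of M γ for γ ≠ 0
  have hrank : ∀ γ : AdjoinRoot h, γ ≠ 0 → (M γ).rank = n := by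
    intro γ hγ
    have hdet : (M γ).det ≠ 0 := by
      intro hdet
      obtain ⟨v, hv, hmv⟩ := (Matrix.exists_mulVec_eq_zero_iff).mpr hdet
      set y : AdjoinRoot h := ∑ k : Fin n, v k • ξ ^ (k : ℕ) with hy
      have hy0 : y ≠ 0 := by
        intro hy0
        apply hv
        have hlin := Fintype.linearIndependent_iff.mp B.linearIndependent v
          (by simp_rw [hB]; exact hy0)
        funext k; exact hlin k
      have hTrj : ∀ j : Fin n, Tr n ((γ * y) * ξ ^ (j : ℕ)) = 0 := by
        intro j
        have h0 := congrArg (algebraMap (ZMod 2) (AdjoinRoot h)) (congrFun hmv j)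
        rw [Pi.zero_apply, map_zero] at h0
        rw [Matrix.mulVec, dotProduct] at h0
        rw [map_sum] at h0
        have hterm : ∀ k : Fin n, algebraMap (ZMod 2) (AdjoinRoot h) (M γ j k * v k)
            = Tr n (v k • (γ * ξ ^ ((j : ℕ) + (k : ℕ)))) := by
          intro k
          rw [_root_.map_mul, hM, Tr_smul, Algebra.smul_def, mul_comm]
        rw [Finset.sum_congr rfl (fun k _ => hterm k)] at h0
        rw [← hTrsum] at h0
        have hgy : (γ * y) * ξ ^ (j : ℕ)
            = ∑ k : Fin n, v k • (γ * ξ ^ ((j : ℕ) + (k : ℕ))) := by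
          rw [hy, Finset.mul_sum, Finset.sum_mul]
          refine Finset.sum_congr rfl (fun k _ => ?_)
          rw [mul_smul_comm, smul_mul_assoc]
          congr 1
          rw [pow_add]; ring
        rw [hgy]
        exact h0
      have hgy0 : γ * y = 0 := nondeg _ hTrj
      rcases mul_eq_zero.mp hgy0 with h' | h'
      · exact hγ h'
      · exact hy0 h'
    have := Matrix.rank_of_isUnit (M γ)
      ((Matrix.isUnit_iff_isUnit_det _).mpr (isUnit_iff_ne_zero.mpr hdet))
    rwa [Fintype.card_fin] at this
  refine ⟨?_, ?_, ?_, ?_⟩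
  · -- cardinality
    rw [hSrange, Nat.card_range_of_injective Minj, Nat.card_eq_fintype_card, hcard]
  · -- symmetry
    intro K hK
    obtain ⟨α, hα⟩ := (hmem K).mp hK
    ext j k
    rw [Matrix.transpose_apply]
    apply hinj
    rw [hα j k, hα k j, Nat.add_comm]
  · -- zero matrix
    refine (hmem 0).mpr ⟨0, fun j k => ?_⟩
    simp [Tr_zero]
  · -- rank condition
    intro K₁ hK₁ K₂ hK₂ hne
    obtain ⟨α, rfl⟩ := hSM K₁ hK₁
    obtain ⟨β, rfl⟩ := hSM K₂ hK₂
    rw [Madd]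
    refine hrank _ (fun hz => hne ?_)
    have : α = β := by rwa [← CharTwo.sub_eq_add, sub_eq_zero] at hz
    rw [this]
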